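/- Let a, b, p, q be positive real numbers. For integers n ≥ 0 and 0 ≤ k ≤ n define f(n,k) = (2k − n) / ( (k+1+a)^p (n−k+1+a)^p (k+1+b)^{q+1} (n−k+1+b)^{q+2} ). Then for every nonnegative integer n, Σ_{k=0}^{n} f(n,k) ≥ 0. -/

import Mathlib

open Real Finset

lemma turan_pair_nonneg (p q a b x y : ℝ)
    (hxa : 0 < x + 1 + a) (hya : 0 < y + 1 + a)
    (hxb : 0 < x + 1 + b) (hyb : 0 < y + 1 + b) :
    0 ≤ (x - y) / ((x+1+a)^p * (y+1+a)^p * (x+1+b)^(q+1) * (y+1+b)^(q+2))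
      + (y - x) / ((y+1+a)^p * (x+1+a)^p * (y+1+b)^(q+1) * (x+1+b)^(q+2)) := by
  have hA : 0 < (x+1+a) ^ p := rpow_pos_of_pos hxa p
  have hB : 0 < (y+1+a) ^ p := rpow_pos_of_pos hya p
  have hU : 0 < (x+1+b) ^ (q+1) := rpow_pos_of_pos hxb _
  have hV : 0 < (y+1+b) ^ (q+1) := rpow_pos_of_pos hyb _
  have e2 : q + 2 = (q + 1) + 1 := by ring
  rw [e2, rpow_add hxb (q+1) 1, rpow_add hyb (q+1) 1, rpow_one, rpow_one]
  have heq : (x - y) / ((x+1+a)^p * (y+1+a)^p * (x+1+b)^(q+1) * ((y+1+b)^(q+1) * (y+1+b)))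
      + (y - x) / ((y+1+a)^p * (x+1+a)^p * (y+1+b)^(q+1) * ((x+1+b)^(q+1) * (x+1+b)))
      = (x - y)^2 /
        ((x+1+a)^p * (y+1+a)^p * (x+1+b)^(q+1) * (y+1+b)^(q+1) * (x+1+b) * (y+1+b)) := by
    field_simp
    ring
  rw [heq]
  apply div_nonneg (sq_nonneg _)
  positivity

theorem turan_coefficient_sum_nonneg
    (a b p q : ℝ) (ha : 0 < a) (hb : 0 < b) (hp : 0 < p) (hq : 0 < q) :
    ∀ n : ℕ,
      0 ≤ ∑ k ∈ Finset.range (n + 1),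
        (2 * (k : ℝ) - (n : ℝ)) /
          (((k : ℝ) + 1 + a) ^ p * ((n : ℝ) - (k : ℝ) + 1 + a) ^ p *
            ((k : ℝ) + 1 + b) ^ (q + 1) * ((n : ℝ) - (k : ℝ) + 1 + b) ^ (q + 2)) := by
  intro n
  set g : ℕ → ℝ := fun k =>
    (2 * (k : ℝ) - (n : ℝ)) /
      (((k : ℝ) + 1 + a) ^ p * ((n : ℝ) - (k : ℝ) + 1 + a) ^ p *
        ((k : ℝ) + 1 + b) ^ (q + 1) * ((n : ℝ) - (k : ℝ) + 1 + b) ^ (q + 2)) with hg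
  have hrefl : ∑ k ∈ range (n + 1), g (n - k) = ∑ k ∈ range (n + 1), g k := by
    have := Finset.sum_range_reflect g (n + 1)
    simpa using this
  have hpair : 0 ≤ ∑ k ∈ range (n + 1), (g k + g (n - k)) := by
    apply Finset.sum_nonneg
    intro k hk
    have hkn : k ≤ n := Nat.lt_succ_iff.mp (Finset.mem_range.mp hk)
    have hcast : ((n - k : ℕ) : ℝ) = (n : ℝ) - (k : ℝ) := by
      exact Nat.cast_sub hkn
    simp only [hg, hcast]
    have e1 : (n : ℝ) - ((n : ℝ) - (k : ℝ)) = (k : ℝ) := by ring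
    rw [e1]
    have e2 : 2 * (k : ℝ) - (n : ℝ) = (k : ℝ) - ((n : ℝ) - (k : ℝ)) := by ring
    have e3 : 2 * ((n : ℝ) - (k : ℝ)) - (n : ℝ) = ((n : ℝ) - (k : ℝ)) - (k : ℝ) := by ring
    rw [e2, e3]
    have hk0 : (0:ℝ) ≤ (k : ℝ) := Nat.cast_nonneg k
    have hnk0 : (0:ℝ) ≤ (n : ℝ) - (k : ℝ) := by
      have : (k:ℝ) ≤ n := by exact_mod_cast hkn
      linarith
    exact turan_pair_nonneg p q a b (k : ℝ) ((n : ℝ) - (k : ℝ))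
      (by linarith) (by linarith) (by linarith) (by linarith)
  have hsum : ∑ k ∈ range (n + 1), (g k + g (n - k))
      = 2 * ∑ k ∈ range (n + 1), g k := by
    rw [Finset.sum_add_distrib, hrefl]; ring
  rw [hsum] at hpair
  linarith
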